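/- One-step positivity estimate: Let τ ≤ h²/2, 1 ≤ q < 2, β < 0, and let a, b, c ≥ 0 with max(b, c) ≤ M₀ and h^{2-q} ≤ 2^q/(|β| M₀^{q-1}). Then a + τ[(b - 2a + c)/h² + a^p + β|(c - b)/(2h)|^q] ≥ 0 for any p ≥ 1. -/

import Mathlib

/-- One-step positivity of the explicit Euler update: for `τ ≤ h²/2`, `1 ≤ q < 2`,
`β < 0`, `a, b, c ≥ 0` with `max(b,c) ≤ M₀` and `h^{2-q} ≤ 2^q/(|β| M₀^{q-1})`,
one has `a + τ[(b - 2a + c)/h² + a^p + β|(c-b)/(2h)|^q] ≥ 0` for any `p ≥ 1`. -/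
theorem one_step_positivity
    (τ h q β a b c M₀ p : ℝ)
    (hτ0 : 0 < τ) (hh : 0 < h) (hτ : τ ≤ h ^ 2 / 2)
    (hq1 : 1 ≤ q) (hq2 : q < 2) (hβ : β < 0)
    (ha : 0 ≤ a) (hb : 0 ≤ b) (hc : 0 ≤ c)
    (hbM : b ≤ M₀) (hcM : c ≤ M₀)
    (hmesh : h ^ (2 - q) ≤ 2 ^ q / (|β| * M₀ ^ (q - 1)))
    (hp : 1 ≤ p) :
    0 ≤ a + τ * ((b - 2 * a + c) / h ^ 2 + a ^ p + β * |(c - b) / (2 * h)| ^ q) := by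
  have hq0 : 0 < q := by linarith
  have hβ' : 0 < |β| := abs_pos.mpr (ne_of_lt hβ)
  have hM0 : 0 ≤ M₀ := le_trans hb hbM
  have hMq : 0 ≤ M₀ ^ (q - 1) := Real.rpow_nonneg hM0 _
  -- step 1: |c - b|^q ≤ M₀^(q-1) * (b + c)
  have hmax : |c - b| ≤ max b c := by
    rw [abs_le]
    constructor
    · have := le_max_left b c; linarith [hc]
    · have := le_max_right b c; linarith [hb]
  have hbq : b ^ q ≤ M₀ ^ (q - 1) * b := by
    rcases eq_or_lt_of_le hb with h0 | h0
    · rw [← h0, Real.zero_rpow (ne_of_gt hq0)]; simp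
    · have e : b ^ q = b ^ (q - 1) * b := by
        rw [← Real.rpow_add_one (ne_of_gt h0) (q - 1)]; ring_nf
      rw [e]
      exact mul_le_mul_of_nonneg_right
        (Real.rpow_le_rpow hb hbM (by linarith)) hb
  have hcq : c ^ q ≤ M₀ ^ (q - 1) * c := by
    rcases eq_or_lt_of_le hc with h0 | h0
    · rw [← h0, Real.zero_rpow (ne_of_gt hq0)]; simp
    · have e : c ^ q = c ^ (q - 1) * c := by
        rw [← Real.rpow_add_one (ne_of_gt h0) (q - 1)]; ring_nf
      rw [e]
      exact mul_le_mul_of_nonneg_right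
        (Real.rpow_le_rpow hc hcM (by linarith)) hc
  have habs : |c - b| ^ q ≤ M₀ ^ (q - 1) * (b + c) := by
    have h1 : |c - b| ^ q ≤ (max b c) ^ q :=
      Real.rpow_le_rpow (abs_nonneg _) hmax (le_of_lt hq0)
    have h2 : (max b c) ^ q ≤ b ^ q + c ^ q := by
      rcases le_total b c with hle | hle
      · rw [max_eq_right hle]
        have : 0 ≤ b ^ q := Real.rpow_nonneg hb _
        linarith
      · rw [max_eq_left hle]
        have : 0 ≤ c ^ q := Real.rpow_nonneg hc _
        linarith
    calc |c - b| ^ q ≤ b ^ q + c ^ q := le_trans h1 h2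
      _ ≤ M₀ ^ (q - 1) * b + M₀ ^ (q - 1) * c := by linarith
      _ = M₀ ^ (q - 1) * (b + c) := by ring
  -- step 2: |β| * M₀^(q-1) ≤ 2^q * h^(q-2)
  have hD : |β| * M₀ ^ (q - 1) ≤ 2 ^ q * h ^ (q - 2) := by
    rcases eq_or_lt_of_le hMq with h0 | h0
    · exfalso
      have : |β| * M₀ ^ (q - 1) = 0 := by rw [← h0]; ring
      rw [this, div_zero] at hmesh
      exact absurd hmesh (not_le.mpr (Real.rpow_pos_of_pos hh _))
    · have hD0 : 0 < |β| * M₀ ^ (q - 1) := mul_pos hβ' h0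
      have hhp : 0 < h ^ (2 - q) := Real.rpow_pos_of_pos hh _
      have h1 : |β| * M₀ ^ (q - 1) * h ^ (2 - q) ≤ 2 ^ q := by
        rw [le_div_iff₀ hD0] at hmesh
        linarith [hmesh]
      have e : h ^ (q - 2) = (h ^ (2 - q))⁻¹ := by
        rw [show q - 2 = -(2 - q) by ring, Real.rpow_neg (le_of_lt hh)]
      rw [e]
      calc |β| * M₀ ^ (q - 1) ≤ 2 ^ q / h ^ (2 - q) := by
            rw [le_div_iff₀ hhp]; linarith
        _ = 2 ^ q * (h ^ (2 - q))⁻¹ := by rw [div_eq_mul_inv]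
  -- step 3: bound the gradient term
  have h2h : (0:ℝ) < 2 * h := by linarith
  have hX : |(c - b) / (2 * h)| ^ q = |c - b| ^ q / (2 ^ q * h ^ q) := by
    rw [abs_div, abs_of_pos h2h, Real.div_rpow (abs_nonneg _) (le_of_lt h2h),
      Real.mul_rpow (by norm_num : (0:ℝ) ≤ 2) (le_of_lt hh)]
  have hh2 : (0:ℝ) < h ^ 2 := by positivity
  have hhq : (0:ℝ) < h ^ q := Real.rpow_pos_of_pos hh q
  have h2q : (0:ℝ) < (2:ℝ) ^ q := Real.rpow_pos_of_pos two_pos q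
  have hnum : |β| * |c - b| ^ q ≤ 2 ^ q * h ^ (q - 2) * (b + c) := by
    calc |β| * |c - b| ^ q ≤ |β| * (M₀ ^ (q - 1) * (b + c)) :=
          mul_le_mul_of_nonneg_left habs (le_of_lt hβ')
      _ = |β| * M₀ ^ (q - 1) * (b + c) := by ring
      _ ≤ 2 ^ q * h ^ (q - 2) * (b + c) :=
          mul_le_mul_of_nonneg_right hD (by linarith)
  have hcomb : h ^ (q - 2) * h ^ 2 = h ^ q := by
    rw [show (h:ℝ) ^ (2:ℕ) = h ^ ((2:ℕ):ℝ) from (Real.rpow_natCast h 2).symm]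
    push_cast
    rw [← Real.rpow_add hh]
    norm_num
  have hkey : |β| * |(c - b) / (2 * h)| ^ q ≤ (b + c) / h ^ 2 := by
    rw [hX, ← mul_div_assoc, div_le_div_iff₀ (mul_pos h2q hhq) hh2]
    have e : 2 ^ q * h ^ (q - 2) * (b + c) * h ^ 2 = (b + c) * (2 ^ q * h ^ q) := by
      rw [← hcomb]; ring
    have h1 := mul_le_mul_of_nonneg_right hnum (le_of_lt hh2)
    linarith
  have hbound : -((b + c) / h ^ 2) ≤ β * |(c - b) / (2 * h)| ^ q := by
    have e : β * |(c - b) / (2 * h)| ^ q = -(|β| * |(c - b) / (2 * h)| ^ q) := by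
      rw [abs_of_neg hβ]; ring
    rw [e]; linarith
  -- conclusion
  have hap : 0 ≤ a ^ p := Real.rpow_nonneg ha p
  have hbr : -(2 * a) / h ^ 2 ≤ (b - 2 * a + c) / h ^ 2 + a ^ p + β * |(c - b) / (2 * h)| ^ q := by
    have e : (b - 2 * a + c) / h ^ 2 - (b + c) / h ^ 2 = -(2 * a) / h ^ 2 := by
      field_simp
      ring
    linarith
  have hmono := mul_le_mul_of_nonneg_left hbr (le_of_lt hτ0)
  have hfin : (2 * τ * a) / h ^ 2 ≤ a := by
    rw [div_le_iff₀ hh2]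
    nlinarith [mul_le_mul_of_nonneg_right hτ ha]
  have e2 : τ * (-(2 * a) / h ^ 2) = -((2 * τ * a) / h ^ 2) := by ring
  linarith [hmono, e2]
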